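/- Let λ ∈ ℂ, let z ∈ ℝ with -1/√2 < z < 1, and let t ∈ ℂ with |t| < 1. Then (1 + z·√(1-t))^{-λ} = ∑_{n=0}^∞ (𝔄_n^{(λ)}(z) / (2^n n!)) · t^n, where the coefficients are given by the absolutely convergent series 𝔄_n^{(λ)}(z) = 2^n ∑_{j=0}^∞ ((-1)^{j+n} (λ)_j Γ(j/2 + 1) / (Γ(j/2 - n + 1) · j!)) z^j; here √(1-t) and the power w^{-λ} are principal branches (and 1 + z√(1-t) ≠ 0 under these hypotheses). -/

import Mathlib

noncomputable def pochC (a : ℂ) (n : ℕ) : ℂ := (ascPochhammer ℂ n).eval a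
lemma pochC_zero (a : ℂ) : pochC a 0 = 1 := by simp [pochC]
lemma pochC_succ (a : ℂ) (n : ℕ) : pochC a (n + 1) = pochC a n * (a + n) := by
  simp [pochC, ascPochhammer_succ_eval]

lemma one_sub_slit {y : ℂ} (hy : ‖y‖ < 1) : (1 - y) ∈ Complex.slitPlane := by
  rw [Complex.mem_slitPlane_iff]
  left
  have : y.re ≤ ‖y‖ := by
    simpa using Complex.re_le_norm y
  simp only [Complex.sub_re, Complex.one_re]
  linarith

lemma hasDerivAt_base (c : ℂ) {y : ℂ} (hy : ‖y‖ < 1) :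
    HasDerivAt (fun x : ℂ => (1 - x) ^ c) (c * (1 - y) ^ (c - 1) * (-1)) y := by
  have h1 : HasDerivAt (fun x : ℂ => 1 - x) (-1) y := (hasDerivAt_id y).const_sub 1
  exact h1.cpow_const (one_sub_slit hy)

lemma iteratedDeriv_binom (a : ℂ) : ∀ n : ℕ, ∀ y ∈ Metric.ball (0:ℂ) 1,
    iteratedDeriv n (fun x : ℂ => (1 - x) ^ (-a)) y = pochC a n * (1 - y) ^ (-a - n) := by
  intro n
  induction n with
  | zero =>
    intro y _
    simp [pochC_zero]
  | succ n ih =>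
    intro y hy
    rw [iteratedDeriv_succ]
    have hev : (iteratedDeriv n (fun x : ℂ => (1 - x) ^ (-a)))
        =ᶠ[nhds y] (fun x => pochC a n * (1 - x) ^ (-a - n)) := by
      filter_upwards [Metric.isOpen_ball.mem_nhds hy] with x hx using ih x hx
    rw [hev.deriv_eq]
    have hy' : ‖y‖ < 1 := by simpa using hy
    have hd : HasDerivAt (fun x => pochC a n * (1 - x) ^ (-a - n))
        (pochC a n * ((-a - n) * (1 - y) ^ (-a - n - 1) * (-1))) y :=
      (hasDerivAt_base (-a - n) hy').const_mul (pochC a n)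
    rw [hd.deriv, pochC_succ]
    have hexp : (-a - (n:ℂ)) - 1 = -a - ((n:ℕ)+1 : ℕ) := by push_cast; ring
    rw [hexp]
    ring

lemma hasSum_binomial (a : ℂ) {x : ℂ} (hx : ‖x‖ < 1) :
    HasSum (fun n : ℕ => pochC a n / n.factorial * x ^ n) ((1 - x) ^ (-a)) := by
  have hdiff : DifferentiableOn ℂ (fun y : ℂ => (1 - y) ^ (-a)) (Metric.ball 0 1) := by
    intro y hy
    have hy' : ‖y‖ < 1 := by simpa using hy
    exact (hasDerivAt_base (-a) hy').differentiableAt.differentiableWithinAt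
  have H := Complex.hasSum_taylorSeries_on_ball hdiff (by simpa using hx)
  have heq : (fun n : ℕ => ((n.factorial : ℂ))⁻¹ • (x - 0) ^ n •
      iteratedDeriv n (fun y : ℂ => (1 - y) ^ (-a)) 0)
      = fun n : ℕ => pochC a n / n.factorial * x ^ n := by
    funext n
    rw [iteratedDeriv_binom a n 0 (by simp)]
    simp only [sub_zero, smul_eq_mul]
    rw [Complex.one_cpow]
    ring
  rwa [heq] at H
lemma pochC_prod (a : ℂ) (n : ℕ) : pochC a n = ∏ i ∈ Finset.range n, (a + i) := by
  induction n with
  | zero => simp [pochC]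
  | succ n ih => rw [pochC_succ, ih, Finset.prod_range_succ]

lemma gamma_prod (x : ℂ) : ∀ n : ℕ, Complex.Gamma (x - n + 1) ≠ 0 →
    Complex.Gamma (x + 1) = (∏ i ∈ Finset.range n, (x - i)) * Complex.Gamma (x - n + 1) := by
  intro n
  induction n with
  | zero => intro _; simp
  | succ n ih =>
    intro h
    have e1 : x - ((n:ℕ)+1 : ℕ) + 1 = x - n := by push_cast; ring
    rw [e1] at h ⊢
    have hxn : x - n ≠ 0 := by
      intro h0
      rw [h0] at h
      exact h Complex.Gamma_zero
    have hne : Complex.Gamma (x - n + 1) ≠ 0 := by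
      rw [Complex.Gamma_add_one _ hxn]
      exact mul_ne_zero hxn h
    rw [ih hne, Complex.Gamma_add_one _ hxn, Finset.prod_range_succ]
    ring

lemma pochC_neg_eq_gamma (j n : ℕ) :
    pochC (-((j:ℂ)/2)) n
      = (-1:ℂ)^n * Complex.Gamma ((j:ℂ)/2 + 1) / Complex.Gamma ((j:ℂ)/2 - n + 1) := by
  set x : ℂ := (j:ℂ)/2 with hx
  have hprodneg : pochC (-x) n = (-1:ℂ)^n * ∏ i ∈ Finset.range n, (x - i) := by
    rw [pochC_prod]
    have : ∀ i : ℕ, (-x + (i:ℂ)) = (-1) * (x - i) := fun i => by ring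
    calc ∏ i ∈ Finset.range n, (-x + (i:ℂ))
        = ∏ i ∈ Finset.range n, ((-1) * (x - (i:ℂ))) := by
          exact Finset.prod_congr rfl fun i _ => this i
      _ = (-1:ℂ)^n * ∏ i ∈ Finset.range n, (x - i) := by
          rw [Finset.prod_mul_distrib, Finset.prod_const, Finset.card_range]
  by_cases hG : Complex.Gamma (x - n + 1) = 0
  · obtain ⟨m, hm⟩ := (Complex.Gamma_eq_zero_iff _).1 hG
    have hre := congrArg Complex.re hm
    simp only [Complex.add_re, Complex.sub_re, Complex.one_re, Complex.natCast_re,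
      Complex.neg_re] at hre
    have hxre : x.re = (j:ℝ)/2 := by
      rw [hx]
      simp [Complex.div_re]
    rw [hxre] at hre
    -- (j:ℝ)/2 - n + 1 = -m
    have hmn : (m:ℕ) + 1 ≤ n := by
      by_contra hc
      push_neg at hc
      have h1 : (n:ℝ) ≤ m := by exact_mod_cast Nat.lt_succ_iff.mp hc
      have : (j:ℝ)/2 < 0 := by linarith
      have : (0:ℝ) ≤ (j:ℝ)/2 := by positivity
      linarith
    set p : ℕ := n - 1 - m with hp
    have hpn : p < n := by omega
    have hjp : (j:ℝ) = 2 * p := by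
      have hpr : (p:ℝ) = (n:ℝ) - 1 - m := by
        rw [hp, Nat.cast_sub (by omega), Nat.cast_sub (by omega)]
        push_cast
        ring
      linarith
    have hxp : x = (p:ℂ) := by
      rw [hx]
      have : (j:ℂ) = 2 * p := by exact_mod_cast congrArg (Complex.ofReal) hjp
      rw [this]
      ring
    rw [hG, div_zero, hprodneg, hxp]
    have : ((p:ℂ) - (p:ℕ)) = 0 := by simp
    rw [Finset.prod_eq_zero (Finset.mem_range.2 hpn) this]
    ring
  · rw [hprodneg, gamma_prod x n hG]
    field_simp

lemma one_sub_ne {τ : ℂ} (hτ : ‖τ‖ < 1) : (1 - τ) ≠ 0 := by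
  intro h
  have : τ = 1 := by linear_combination -h
  rw [this] at hτ
  simp at hτ

lemma one_sub_re_pos {τ : ℂ} (hτ : ‖τ‖ < 1) : 0 < (1 - τ).re := by
  have : τ.re ≤ ‖τ‖ := by simpa using Complex.re_le_norm τ
  simp only [Complex.sub_re, Complex.one_re]
  linarith

lemma sqrt_re_pos {τ : ℂ} (hτ : ‖τ‖ < 1) : 0 < ((1 - τ) ^ (1/2 : ℂ)).re := by
  rw [Complex.cpow_def_of_ne_zero (one_sub_ne hτ), Complex.exp_re]
  apply mul_pos (Real.exp_pos _)
  apply Real.cos_pos_of_mem_Ioo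
  have him : (Complex.log (1 - τ) * (1/2 : ℂ)).im = Complex.arg (1 - τ) / 2 := by
    rw [Complex.mul_im]
    simp [Complex.log_im]
    ring
  rw [him]
  have harg : |Complex.arg (1 - τ)| < Real.pi / 2 := by
    rw [Complex.abs_arg_lt_pi_div_two_iff]
    exact Or.inl (one_sub_re_pos hτ)
  rw [abs_lt] at harg
  have hpi : 0 < Real.pi := Real.pi_pos
  constructor
  · linarith [harg.1]
  · linarith [harg.2]

lemma sqrt_abs_le {τ : ℂ} (hτ : ‖τ‖ < 1) :
    ‖(1 - τ) ^ (1/2 : ℂ)‖ ≤ Real.sqrt (1 + ‖τ‖) := by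
  have h12 : (1/2 : ℂ) = ((1/2 : ℝ) : ℂ) := by norm_num
  rw [h12, Complex.norm_cpow_real]
  rw [Real.sqrt_eq_rpow]
  apply Real.rpow_le_rpow (norm_nonneg _) _ (by norm_num)
  calc ‖1 - τ‖ ≤ ‖(1:ℂ)‖ + ‖τ‖ := by
        simpa using norm_sub_le (1:ℂ) τ
  _ = 1 + ‖τ‖ := by simp

lemma sqrt_abs_lt_sqrt2 {τ : ℂ} (hτ : ‖τ‖ < 1) :
    ‖(1 - τ) ^ (1/2 : ℂ)‖ < Real.sqrt 2 := by
  refine lt_of_le_of_lt (sqrt_abs_le hτ) ?_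
  apply Real.sqrt_lt_sqrt (by positivity)
  linarith

lemma slit_main (z : ℝ) (hz1 : -(1 / Real.sqrt 2) < z) (hz2 : z < 1) {τ : ℂ} (hτ : ‖τ‖ < 1) :
    (1 + (z:ℂ) * (1 - τ) ^ (1/2 : ℂ)) ∈ Complex.slitPlane := by
  set w : ℂ := (1 - τ) ^ (1/2 : ℂ) with hw
  rw [Complex.mem_slitPlane_iff]
  have hre : (1 + (z:ℂ) * w).re = 1 + z * w.re := by
    simp [Complex.add_re, Complex.mul_re]
  have him : (1 + (z:ℂ) * w).im = z * w.im := by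
    simp [Complex.add_im, Complex.mul_im]
  by_cases hz0 : z = 0
  · left; rw [hre, hz0]; norm_num
  by_cases hwim : w.im = 0
  · left
    rw [hre]
    have hwre : 0 < w.re := sqrt_re_pos hτ
    have hwre2 : w.re < Real.sqrt 2 := by
      have h1 : w.re ≤ ‖w‖ := Complex.re_le_norm w
      exact lt_of_le_of_lt h1 (sqrt_abs_lt_sqrt2 hτ)
    rcases le_or_gt 0 z with hz | hz
    · nlinarith
    · have h2 : 0 < Real.sqrt 2 := by positivity
      have h3 : -z < 1 / Real.sqrt 2 := by linarith
      have h4 : (-z) * w.re < (1 / Real.sqrt 2) * Real.sqrt 2 :=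
        mul_lt_mul'' h3 hwre2 (by linarith) hwre.le
      rw [one_div, inv_mul_cancel₀ (ne_of_gt h2)] at h4
      linarith
  · right
    rw [him]
    exact mul_ne_zero (by exact_mod_cast hz0) hwim

lemma pochC_norm_le (a : ℂ) (m : ℕ) (hm : ‖a‖ ≤ m) (hm1 : 1 ≤ m) :
    ∀ j : ℕ, ‖pochC a j‖ ≤ (j + 1 : ℝ) ^ m * j.factorial := by
  intro j
  induction j with
  | zero => simp [pochC_zero]
  | succ j ih =>
    rw [pochC_succ]
    have h1 : ‖pochC a j * (a + j)‖ ≤ ((j:ℝ) + 1) ^ m * j.factorial * (m + j) := by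
      rw [norm_mul]
      have : ‖a + (j:ℂ)‖ ≤ (m : ℝ) + j := by
        calc ‖a + (j:ℂ)‖ ≤ ‖a‖ + ‖(j:ℂ)‖ := norm_add_le _ _
        _ ≤ (m:ℝ) + j := by
            have : ‖(j:ℂ)‖ = (j:ℝ) := by simp
            rw [this]; linarith
      exact mul_le_mul ih this (norm_nonneg _) (by positivity)
    refine h1.trans ?_
    -- key: (j+1)^m * (m+j) ≤ (j+2)^m * (j+1)
    have hj1 : (0:ℝ) < (j:ℝ) + 1 := by positivity
    have hbern : (1 : ℝ) + (m:ℝ) * (1 / ((j:ℝ) + 1)) ≤ (1 + 1 / ((j:ℝ) + 1)) ^ m := by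
      apply one_add_mul_le_pow
      have : (0:ℝ) ≤ 1 / ((j:ℝ)+1) := by positivity
      linarith
    have key : ((j:ℝ) + 1) ^ m * ((m:ℝ) + j) ≤ ((j:ℝ) + 2) ^ m * ((j:ℝ) + 1) := by
      have h2 : ((j:ℝ) + 1) * (1 + 1 / ((j:ℝ) + 1)) = (j:ℝ) + 2 := by field_simp; ring
      have h3 : (((j:ℝ) + 1) * (1 + 1 / ((j:ℝ) + 1))) ^ m = ((j:ℝ)+2)^m := by rw [h2]
      rw [mul_pow] at h3
      have h4 : ((j:ℝ)+1)^m * ((1 + (m:ℝ) * (1/((j:ℝ)+1))) * ((j:ℝ)+1))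
          ≤ ((j:ℝ)+1)^m * ((1 + 1/((j:ℝ)+1))^m * ((j:ℝ)+1)) := by
        gcongr
      have h5 : (1 + (m:ℝ) * (1/((j:ℝ)+1))) * ((j:ℝ)+1) = (j:ℝ) + 1 + m := by
        field_simp
      rw [h5] at h4
      calc ((j:ℝ)+1)^m * ((m:ℝ)+j) ≤ ((j:ℝ)+1)^m * ((j:ℝ)+1+m) := by
            apply mul_le_mul_of_nonneg_left (by linarith) (by positivity)
      _ ≤ ((j:ℝ)+1)^m * ((1 + 1/((j:ℝ)+1))^m * ((j:ℝ)+1)) := h4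
      _ = ((j:ℝ)+2)^m * ((j:ℝ)+1) := by rw [← mul_assoc, ← h3]
    have : ((j:ℝ)+1)^m * j.factorial * ((m:ℝ)+j) = (((j:ℝ)+1)^m * ((m:ℝ)+j)) * j.factorial := by
      ring
    rw [this]
    have h6 : (((j:ℝ)+1)^m * ((m:ℝ)+j)) * j.factorial ≤ (((j:ℝ)+2)^m * ((j:ℝ)+1)) * j.factorial :=
      mul_le_mul_of_nonneg_right key (by positivity)
    refine h6.trans_eq ?_
    push_cast [Nat.factorial_succ]
    ring

lemma summable_aux (K : ℕ) {r : ℝ} (hr0 : 0 ≤ r) (hr : r < 1) :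
    Summable (fun j : ℕ => ((j:ℝ) + 1) ^ K * r ^ j) := by
  have hs : ∀ i : ℕ, Summable (fun j : ℕ => (K.choose i : ℝ) * (j:ℝ) ^ i * r ^ j) := by
    intro i
    have := summable_pow_mul_geometric_of_norm_lt_one (R := ℝ) i
      (r := r) (by rwa [Real.norm_eq_abs, abs_of_nonneg hr0])
    simpa [mul_assoc] using this.mul_left (K.choose i : ℝ)
  have hsum : Summable (fun j : ℕ => ∑ i ∈ Finset.range (K+1),
      (K.choose i : ℝ) * (j:ℝ) ^ i * r ^ j) := by
    apply summable_sum
    intro i _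
    exact hs i
  apply hsum.of_nonneg_of_le (fun j => by positivity)
  intro j
  have : ((j:ℝ) + 1) ^ K = ∑ i ∈ Finset.range (K+1), (j:ℝ)^i * 1^(K-i) * K.choose i := by
    exact add_pow (j:ℝ) 1 K
  rw [this, Finset.sum_mul]
  apply Finset.sum_le_sum
  intro i _
  simp [one_pow]
  apply le_of_eq
  ring

lemma summable_pochC_mul (a : ℂ) (k : ℕ) {r : ℝ} (hr0 : 0 ≤ r) (hr : r < 1) :
    Summable (fun j : ℕ => ‖pochC a j‖ / j.factorial * ((j:ℝ) + 1) ^ k * r ^ j) := by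
  obtain ⟨m, hm, hm1⟩ : ∃ m : ℕ, ‖a‖ ≤ m ∧ 1 ≤ m := by
    refine ⟨⌈‖a‖⌉₊ + 1, ?_, by omega⟩
    push_cast
    have := Nat.le_ceil ‖a‖
    linarith
  apply (summable_aux (m + k) hr0 hr).of_nonneg_of_le (fun j => by positivity)
  intro j
  have hb := pochC_norm_le a m hm hm1 j
  have hfac : (0:ℝ) < j.factorial := by positivity
  have h1 : ‖pochC a j‖ / j.factorial ≤ ((j:ℝ)+1)^m := by
    rw [div_le_iff₀ hfac]
    simpa using hb
  calc ‖pochC a j‖ / j.factorial * ((j:ℝ)+1)^k * r ^ j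
      ≤ ((j:ℝ)+1)^m * ((j:ℝ)+1)^k * r ^ j := by
        apply mul_le_mul_of_nonneg_right _ (by positivity)
        exact mul_le_mul_of_nonneg_right h1 (by positivity)
  _ = ((j:ℝ)+1)^(m+k) * r ^ j := by rw [pow_add]

noncomputable def apC (lam : ℂ) (z : ℝ) (j : ℕ) : ℂ :=
  pochC lam j / j.factorial * (-(z:ℂ)) ^ j

noncomputable def bpC (j n : ℕ) : ℂ := pochC (-((j:ℂ)/2)) n / n.factorial

lemma bp_norm_le_low (j : ℕ) : ∀ n : ℕ, n ≤ j/2 + 1 → ‖pochC (-((j:ℂ)/2)) n‖ ≤ ((j:ℝ)/2) ^ n := by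
  intro n
  induction n with
  | zero => intro _; simp [pochC_prod]
  | succ n ih =>
    intro hn
    have hn' : n ≤ j / 2 := by omega
    rw [pochC_succ, norm_mul]
    have h1 : ‖(-((j:ℂ)/2) + n)‖ = |(n:ℝ) - (j:ℝ)/2| := by
      have : (-((j:ℂ)/2) + n) = (((n:ℝ) - (j:ℝ)/2 : ℝ) : ℂ) := by push_cast; ring
      rw [this, Complex.norm_real, Real.norm_eq_abs]
    have h2 : (n:ℝ) ≤ (j:ℝ) := by
      have : n ≤ j := by omega
      exact_mod_cast this
    have h3 : |(n:ℝ) - (j:ℝ)/2| ≤ (j:ℝ)/2 := by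
      rw [abs_le]
      constructor
      · have : (0:ℝ) ≤ n := by positivity
        linarith
      · linarith
    rw [h1, pow_succ]
    exact mul_le_mul (ih (by omega)) h3 (abs_nonneg _) (by positivity)

lemma bp_decay (j : ℕ) : ∀ k : ℕ,
    ‖pochC (-((j:ℂ)/2)) (j/2 + 1 + k)‖ / (j/2 + 1 + k).factorial
      ≤ ‖pochC (-((j:ℂ)/2)) (j/2 + 1)‖ / (j/2 + 1).factorial := by
  intro k
  induction k with
  | zero => simp
  | succ k ih =>
    refine le_trans ?_ ih
    set n := j / 2 + 1 + k with hnd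
    have hstep : ‖pochC (-((j:ℂ)/2)) (n+1)‖ / (n+1).factorial
        ≤ ‖pochC (-((j:ℂ)/2)) n‖ / n.factorial := by
      rw [pochC_succ, norm_mul, Nat.factorial_succ]
      have h1 : ‖(-((j:ℂ)/2) + n)‖ = |(n:ℝ) - (j:ℝ)/2| := by
        have : (-((j:ℂ)/2) + n) = (((n:ℝ) - (j:ℝ)/2 : ℝ) : ℂ) := by push_cast; ring
        rw [this, Complex.norm_real, Real.norm_eq_abs]
      have hj2 : (j:ℝ) ≤ 2 * (j/2 : ℕ) + 1 := by
        have := Nat.div_add_mod j 2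
        have h2 : j ≤ 2 * (j/2) + 1 := by omega
        exact_mod_cast h2
      have hn2 : (j/2 : ℕ) + 1 ≤ n := by omega
      have hn2' : ((j/2 : ℕ) : ℝ) + 1 ≤ n := by exact_mod_cast hn2
      have h3 : |(n:ℝ) - (j:ℝ)/2| ≤ (n:ℝ) + 1 := by
        rw [abs_le]
        constructor
        · linarith
        · have : (0:ℝ) ≤ (j:ℝ)/2 := by positivity
          linarith
      rw [h1]
      rw [div_le_div_iff₀ (by positivity) (by positivity)]
      push_cast
      have hfac : (0:ℝ) < n.factorial := by positivity
      have hnorm : (0:ℝ) ≤ ‖pochC (-((j:ℂ)/2)) n‖ := norm_nonneg _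
      calc ‖pochC (-((j:ℂ)/2)) n‖ * |(n:ℝ) - (j:ℝ)/2| * n.factorial
          ≤ ‖pochC (-((j:ℂ)/2)) n‖ * ((n:ℝ)+1) * n.factorial := by
            apply mul_le_mul_of_nonneg_right _ (by positivity)
            exact mul_le_mul_of_nonneg_left h3 hnorm
        _ = ‖pochC (-((j:ℂ)/2)) n‖ * (((n:ℝ)+1) * n.factorial) := by ring
    rw [hnd] at hstep
    have : j / 2 + 1 + (k + 1) = (j/2 + 1 + k) + 1 := by omega
    rw [this]
    exact hstep

lemma bp_row_summable (j : ℕ) {r : ℝ} (h0 : 0 ≤ r) (hr : r < 1) :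
    Summable (fun n : ℕ => ‖pochC (-((j:ℂ)/2)) n‖ / n.factorial * r ^ n) := by
  have h := summable_pochC_mul (-((j:ℂ)/2)) 0 h0 hr
  exact h.congr fun n => by simp

lemma exp_single_bound (X : ℝ) (hX : 0 ≤ X) (M : ℕ) : X ^ M / M.factorial ≤ Real.exp X := by
  have h1 := Real.sum_le_exp_of_nonneg hX (M + 1)
  refine le_trans ?_ h1
  have := Finset.single_le_sum (f := fun i : ℕ => X ^ i / i.factorial)
    (fun i _ => by positivity) (Finset.self_mem_range_succ M)
  simpa using this

lemma bp_row_bound (j : ℕ) {r d : ℝ} (h0 : 0 ≤ r) (hrd : r ≤ d) (hd2 : d ≤ 1/2) :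
    ∑' n : ℕ, ‖pochC (-((j:ℂ)/2)) n‖ / n.factorial * r ^ n
      ≤ 3 * Real.exp ((j:ℝ) * d / 2) := by
  have hd0 : 0 ≤ d := le_trans h0 hrd
  have hr1 : r < 1 := by linarith
  set X : ℝ := (j:ℝ) * d / 2 with hX
  have hXeq : (j:ℝ)/2 * d = X := by rw [hX]; ring
  have hX0 : 0 ≤ X := by positivity
  set M : ℕ := j / 2 + 1 with hM
  set f : ℕ → ℝ := fun n => ‖pochC (-((j:ℂ)/2)) n‖ / n.factorial * r ^ n with hf
  have hsum : Summable f := bp_row_summable j h0 hr1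
  rw [← hsum.sum_add_tsum_nat_add M]
  have hterm : ∀ i : ℕ, i ≤ j / 2 + 1 → f i ≤ X ^ i / i.factorial := by
    intro i hi
    have hb := bp_norm_le_low j i hi
    calc f i ≤ ((j:ℝ)/2) ^ i / i.factorial * d ^ i := by
          show ‖pochC (-((j:ℂ)/2)) i‖ / i.factorial * r ^ i ≤ _
          have hri : r ^ i ≤ d ^ i := pow_le_pow_left₀ h0 hrd i
          apply mul_le_mul (by gcongr) hri (by positivity) (by positivity)
      _ = X ^ i / i.factorial := by rw [← hXeq, mul_pow]; ring
  have part1 : ∑ i ∈ Finset.range M, f i ≤ Real.exp X := by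
    refine le_trans (Finset.sum_le_sum (fun i hi => hterm i ?_)) (Real.sum_le_exp_of_nonneg hX0 M)
    have := Finset.mem_range.1 hi
    omega
  have hpt : ∀ i : ℕ, f (i + M) ≤ Real.exp X * r ^ i := by
    intro i
    have hdec := bp_decay j i
    have hMb := hterm M (le_refl _)
    have e1 : i + M = M + i := by omega
    calc f (i + M) = ‖pochC (-((j:ℂ)/2)) (M + i)‖ / (M + i).factorial * (r ^ i * r ^ M) := by
          rw [hf, e1, pow_add]
          ring
      _ ≤ (‖pochC (-((j:ℂ)/2)) M‖ / M.factorial) * (r ^ i * r ^ M) :=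
          mul_le_mul_of_nonneg_right hdec (by positivity)
      _ ≤ (X ^ M / M.factorial) * (r ^ i * 1) := by
          have hfM : ‖pochC (-((j:ℂ)/2)) M‖ / M.factorial * r ^ M ≤ X ^ M / M.factorial := by
            have h2 : ‖pochC (-((j:ℂ)/2)) M‖ / M.factorial * r ^ M = f M := rfl
            rw [h2]
            exact hterm M (le_refl _)
          calc (‖pochC (-((j:ℂ)/2)) M‖ / M.factorial) * (r ^ i * r ^ M)
              = (‖pochC (-((j:ℂ)/2)) M‖ / M.factorial * r ^ M) * r ^ i := by ring
            _ ≤ (X ^ M / M.factorial) * r ^ i := by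
                apply mul_le_mul_of_nonneg_right hfM (by positivity)
            _ = (X ^ M / M.factorial) * (r ^ i * 1) := by ring
      _ ≤ Real.exp X * (r ^ i * 1) := by
          apply mul_le_mul_of_nonneg_right (exp_single_bound X hX0 M) (by positivity)
      _ = Real.exp X * r ^ i := by ring
  have part2 : ∑' i : ℕ, f (i + M) ≤ Real.exp X * 2 := by
    have hsg : Summable (fun i : ℕ => Real.exp X * r ^ i) :=
      (summable_geometric_of_lt_one h0 hr1).mul_left _
    calc ∑' i : ℕ, f (i + M) ≤ ∑' i : ℕ, Real.exp X * r ^ i :=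
          Summable.tsum_le_tsum hpt ((summable_nat_add_iff M).2 hsum) hsg
      _ = Real.exp X * (1 - r)⁻¹ := by
          rw [tsum_mul_left, tsum_geometric_of_lt_one h0 hr1]
      _ ≤ Real.exp X * 2 := by
          apply mul_le_mul_of_nonneg_left _ (Real.exp_nonneg _)
          rw [show (2:ℝ) = ((1:ℝ)/2)⁻¹ by norm_num]
          apply inv_anti₀ (by norm_num)
          linarith
  linarith [Real.exp_nonneg X]

lemma rho_lt_one {Z : ℝ} (h0 : 0 ≤ Z) (h1 : Z < 1) :
    Z * Real.exp ((1 - Z)/2/2) < 1 := by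
  have h2 : Z < Real.exp (Z - 1) := by
    have := Real.add_one_lt_exp (x := Z - 1) (by intro h; apply absurd h; intro h'; linarith)
    linarith
  have h3 : Z * Real.exp ((1 - Z)/2/2) < Real.exp (Z - 1) * Real.exp ((1 - Z)/2/2) :=
    mul_lt_mul_of_pos_right h2 (Real.exp_pos _)
  rw [← Real.exp_add] at h3
  have h4 : Real.exp (Z - 1 + (1 - Z)/2/2) ≤ 1 := by
    rw [Real.exp_le_one_iff]
    linarith
  linarith

lemma sqrt_le_exp_half {x : ℝ} (hx : 0 ≤ x) : Real.sqrt (1 + x) ≤ Real.exp (x / 2) := by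
  have h1 : 1 + x ≤ Real.exp x := by
    have := Real.add_one_le_exp x
    linarith
  have h2 : Real.sqrt (1 + x) ≤ Real.sqrt (Real.exp x) := Real.sqrt_le_sqrt h1
  have h3 : Real.sqrt (Real.exp x) = Real.exp (x / 2) := by
    rw [show Real.exp x = (Real.exp (x / 2)) ^ 2 by
      rw [sq, ← Real.exp_add]; ring_nf]
    exact Real.sqrt_sq (Real.exp_nonneg _)
  rwa [h3] at h2

lemma apC_norm (lam : ℂ) (z : ℝ) (j : ℕ) :
    ‖apC lam z j‖ = ‖pochC lam j‖ / j.factorial * |z| ^ j := by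
  rw [apC, norm_mul, norm_div, norm_pow, norm_neg, Complex.norm_natCast, Complex.norm_real,
    Real.norm_eq_abs]

lemma key_abs_summable (lam : ℂ) (z : ℝ) (hZ : |z| < 1) {r : ℝ} (h0 : 0 ≤ r)
    (hr : r ≤ (1 - |z|)/2) :
    Summable (fun p : ℕ × ℕ =>
      ‖apC lam z p.1‖ * (‖pochC (-((p.1:ℂ)/2)) p.2‖ / p.2.factorial) * r ^ p.2) := by
  have hZ0 : 0 ≤ |z| := abs_nonneg z
  have hd2 : (1 - |z|)/2 ≤ 1/2 := by linarith
  have hr1 : r < 1 := by linarith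
  set ρ : ℝ := |z| * Real.exp ((1 - |z|)/2/2) with hρ
  have hρ0 : 0 ≤ ρ := by positivity
  have hρ1 : ρ < 1 := rho_lt_one hZ0 hZ
  refine (summable_prod_of_nonneg (fun p => by positivity)).2 ⟨fun j => ?_, ?_⟩
  · exact ((bp_row_summable j h0 hr1).mul_left ‖apC lam z j‖).congr fun n => by ring
  · have hmaj : Summable (fun j : ℕ => 3 * (‖pochC lam j‖ / j.factorial * ρ ^ j)) :=
      ((summable_pochC_mul lam 0 hρ0 hρ1).congr fun j => by simp).mul_left 3
    apply hmaj.of_nonneg_of_le (fun j => tsum_nonneg fun n => by positivity)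
    intro j
    have hrow : ∑' n : ℕ, ‖apC lam z j‖ * (‖pochC (-((j:ℂ)/2)) n‖ / n.factorial) * r ^ n
        = ‖apC lam z j‖ * ∑' n : ℕ, ‖pochC (-((j:ℂ)/2)) n‖ / n.factorial * r ^ n := by
      rw [← tsum_mul_left]
      congr 1
      funext n
      ring
    rw [hrow]
    have hb := bp_row_bound j h0 hr hd2
    calc ‖apC lam z j‖ * ∑' n : ℕ, ‖pochC (-((j:ℂ)/2)) n‖ / n.factorial * r ^ n
        ≤ ‖apC lam z j‖ * (3 * Real.exp ((j:ℝ) * ((1 - |z|)/2) / 2)) :=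
          mul_le_mul_of_nonneg_left hb (norm_nonneg _)
      _ = 3 * (‖pochC lam j‖ / j.factorial * ρ ^ j) := by
          rw [apC_norm, hρ, mul_pow, ← Real.exp_nat_mul]
          ring_nf

lemma w_pow (j : ℕ) {τ : ℂ} (hτ : ‖τ‖ < 1) :
    ((1 - τ) ^ (1/2 : ℂ)) ^ j = (1 - τ) ^ ((j:ℂ)/2) := by
  have h : ((j:ℂ)/2) = (j:ℕ) * (1/2 : ℂ) := by push_cast; ring
  rw [h, Complex.cpow_nat_mul]

lemma key_hasSum (lam : ℂ) (z : ℝ) (hZ : |z| < 1) {τ : ℂ} (hτ : ‖τ‖ < (1 - |z|)/2) :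
    HasSum (fun n : ℕ => (∑' j : ℕ, apC lam z j * bpC j n) * τ ^ n)
      ((1 + (z:ℂ) * (1 - τ) ^ (1/2 : ℂ)) ^ (-lam)) := by
  have hZ0 : 0 ≤ |z| := abs_nonneg z
  have hτ1 : ‖τ‖ < 1 := by linarith
  set w : ℂ := (1 - τ) ^ (1/2 : ℂ) with hw
  set u : ℕ × ℕ → ℂ := fun p => apC lam z p.1 * bpC p.1 p.2 * τ ^ p.2 with hu
  have hnorm : ∀ p : ℕ × ℕ, ‖u p‖
      = ‖apC lam z p.1‖ * (‖pochC (-((p.1:ℂ)/2)) p.2‖ / p.2.factorial) * ‖τ‖ ^ p.2 := by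
    intro p
    rw [hu]
    simp only [norm_mul, norm_pow, bpC, norm_div, Complex.norm_natCast]
  have habs : Summable (fun p : ℕ × ℕ => ‖u p‖) :=
    (key_abs_summable lam z hZ (norm_nonneg τ) hτ.le).congr fun p => (hnorm p).symm
  have husum : Summable u := Summable.of_norm habs
  -- row sums over n for fixed j
  have hrow : ∀ j : ℕ, HasSum (fun n => u (j, n)) (apC lam z j * w ^ j) := by
    intro j
    have hb := hasSum_binomial (-((j:ℂ)/2)) hτ1
    rw [neg_neg] at hb
    have hb2 := hb.mul_left (apC lam z j)
    rw [← w_pow j hτ1, ← hw] at hb2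
    exact hb2.congr_fun fun n => by rw [hu]; simp only [bpC]; ring
  -- outer sum over j
  have hzw : ‖-(z:ℂ) * w‖ < 1 := by
    rw [norm_mul, norm_neg, Complex.norm_real, Real.norm_eq_abs]
    have h1 : ‖w‖ ≤ Real.sqrt (1 + ‖τ‖) := by
      rw [hw]
      exact sqrt_abs_le hτ1
    have h2 : Real.sqrt (1 + ‖τ‖) ≤ Real.sqrt (1 + (1 - |z|)/2) :=
      Real.sqrt_le_sqrt (by linarith)
    have h3 : Real.sqrt (1 + (1 - |z|)/2) ≤ Real.exp ((1 - |z|)/2/2) :=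
      sqrt_le_exp_half (by linarith)
    calc |z| * ‖w‖ ≤ |z| * Real.exp ((1 - |z|)/2/2) := by
          apply mul_le_mul_of_nonneg_left _ hZ0
          linarith
      _ < 1 := rho_lt_one hZ0 hZ
  have houter : HasSum (fun j => apC lam z j * w ^ j) ((1 + (z:ℂ) * w) ^ (-lam)) := by
    have hb := hasSum_binomial lam hzw
    have hbase : (1 : ℂ) - (-(z:ℂ) * w) = 1 + (z:ℂ) * w := by ring
    rw [hbase] at hb
    exact hb.congr_fun fun j => by rw [apC, mul_pow]; ring
  have hfib : HasSum (fun j => apC lam z j * w ^ j) (∑' p, u p) :=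
    husum.hasSum.prod_fiberwise hrow
  have htot : HasSum u ((1 + (z:ℂ) * w) ^ (-lam)) := by
    rw [← hfib.unique houter]
    exact husum.hasSum
  -- swap
  have hswap : HasSum (fun p : ℕ × ℕ => u (p.2, p.1)) ((1 + (z:ℂ) * w) ^ (-lam)) := by
    have := ((Equiv.prodComm ℕ ℕ).hasSum_iff (f := u)).2 htot
    exact this
  refine hswap.prod_fiberwise fun n => ?_
  -- column sums over j for fixed n
  have hcol : Summable (fun j => u (j, n)) := by
    apply Summable.of_norm
    exact habs.comp_injective (i := fun j : ℕ => ((j, n) : ℕ × ℕ))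
      fun a b h => (Prod.ext_iff.1 h).1
  have := hcol.hasSum
  have heq : ∑' j, u (j, n) = (∑' j, apC lam z j * bpC j n) * τ ^ n := by
    rw [← tsum_mul_right]
  rwa [heq] at this

lemma H_diffOn (lam : ℂ) (z : ℝ) (hz1 : -(1 / Real.sqrt 2) < z) (hz2 : z < 1) :
    DifferentiableOn ℂ (fun τ : ℂ => (1 + (z:ℂ) * (1 - τ) ^ (1/2 : ℂ)) ^ (-lam))
      (Metric.ball 0 1) := by
  intro τ hτm
  have hτ : ‖τ‖ < 1 := by simpa using hτm
  have hinner : HasDerivAt (fun τ : ℂ => 1 + (z:ℂ) * (1 - τ) ^ (1/2 : ℂ))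
      ((z:ℂ) * ((1/2 : ℂ) * (1 - τ) ^ ((1/2 : ℂ) - 1) * (-1))) τ :=
    (((hasDerivAt_base (1/2 : ℂ) hτ)).const_mul (z:ℂ)).const_add 1
  exact ((hinner.cpow_const (slit_main z hz1 hz2 hτ)).differentiableAt).differentiableWithinAt

lemma stmt_term_eq (lam : ℂ) (z : ℝ) (j n : ℕ) :
    (-1:ℂ) ^ (j + n) * pochC lam j * Complex.Gamma ((j:ℂ)/2 + 1) /
      (Complex.Gamma ((j:ℂ)/2 - n + 1) * (j.factorial : ℂ)) * (z:ℂ) ^ j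
      = apC lam z j * bpC j n * (n.factorial : ℂ) := by
  have hnfac : ((n.factorial : ℂ)) ≠ 0 := Nat.cast_ne_zero.2 n.factorial_ne_zero
  have hjfac : ((j.factorial : ℂ)) ≠ 0 := Nat.cast_ne_zero.2 j.factorial_ne_zero
  have h1 : apC lam z j * bpC j n * (n.factorial : ℂ)
      = apC lam z j * pochC (-((j:ℂ)/2)) n := by
    rw [bpC]
    field_simp
  rw [h1, pochC_neg_eq_gamma, apC, neg_pow (z:ℂ) j, pow_add]
  simp only [div_eq_mul_inv, mul_inv]
  ring


theorem stmt17 (lam : ℂ) (z : ℝ) (hz1 : -(1 / Real.sqrt 2) < z) (hz2 : z < 1)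
    (t : ℂ) (ht : ‖t‖ < 1) :
    (∀ n : ℕ, Summable (fun j : ℕ => ‖(-1 : ℂ) ^ (j + n) * pochC lam j *
        Complex.Gamma ((j : ℂ) / 2 + 1) /
        (Complex.Gamma ((j : ℂ) / 2 - n + 1) * (j.factorial : ℂ)) * (z : ℂ) ^ j‖)) ∧
      HasSum
        (fun n : ℕ =>
          ((2 : ℂ) ^ n * ∑' j : ℕ, (-1 : ℂ) ^ (j + n) * pochC lam j *
              Complex.Gamma ((j : ℂ) / 2 + 1) /
              (Complex.Gamma ((j : ℂ) / 2 - n + 1) * (j.factorial : ℂ)) * (z : ℂ) ^ j) /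
            ((2 : ℂ) ^ n * (n.factorial : ℂ)) * t ^ n)
        ((1 + (z : ℂ) * (1 - t) ^ (1 / 2 : ℂ)) ^ (-lam)) := by
  have hsqrt2 : (1:ℝ) ≤ Real.sqrt 2 := by
    rw [show (1:ℝ) = Real.sqrt 1 by simp]
    exact Real.sqrt_le_sqrt (by norm_num)
  have hZ : |z| < 1 := by
    rw [abs_lt]
    refine ⟨?_, hz2⟩
    have : (1:ℝ) / Real.sqrt 2 ≤ 1 := by
      rw [div_le_one (by positivity)]
      exact hsqrt2
    linarith
  have hZ0 : (0:ℝ) ≤ |z| := abs_nonneg z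
  set δ : ℝ := (1 - |z|) / 2 with hδ
  have hδ0 : 0 < δ := by rw [hδ]; linarith
  set c : ℕ → ℂ := fun n => ∑' j : ℕ, apC lam z j * bpC j n with hc
  have hbpnorm : ∀ j n : ℕ, ‖bpC j n‖ = ‖pochC (-((j:ℂ)/2)) n‖ / (n.factorial : ℝ) :=
    fun j n => by rw [bpC, norm_div, Complex.norm_natCast]
  have habs2 := key_abs_summable lam z hZ (le_of_lt (half_pos hδ0)) (half_le_self hδ0.le)
  have hcolnorm : ∀ n : ℕ, Summable (fun j : ℕ => ‖apC lam z j * bpC j n‖) := by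
    intro n
    have h1 : Summable (fun j : ℕ =>
        ‖apC lam z j‖ * (‖pochC (-((j:ℂ)/2)) n‖ / n.factorial) * (δ/2) ^ n) :=
      habs2.comp_injective (i := fun j : ℕ => ((j, n) : ℕ × ℕ))
        (fun a b h => (Prod.ext_iff.1 h).1)
    have hpow : ((δ/2:ℝ) ^ n) ≠ 0 := by positivity
    apply (h1.mul_right (((δ/2:ℝ) ^ n)⁻¹)).congr
    intro j
    rw [mul_inv_cancel_right₀ hpow, norm_mul, hbpnorm]
  have hclaim1 : ∀ n : ℕ, Summable (fun j : ℕ => ‖(-1 : ℂ) ^ (j + n) * pochC lam j *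
      Complex.Gamma ((j : ℂ) / 2 + 1) /
      (Complex.Gamma ((j : ℂ) / 2 - n + 1) * (j.factorial : ℂ)) * (z : ℂ) ^ j‖) := by
    intro n
    apply ((hcolnorm n).mul_right ((n.factorial : ℝ))).congr
    intro j
    calc ‖apC lam z j * bpC j n‖ * (n.factorial : ℝ)
        = ‖apC lam z j * bpC j n * (n.factorial : ℂ)‖ := by
          rw [norm_mul (apC lam z j * bpC j n) ((n.factorial : ℂ)), Complex.norm_natCast]
      _ = _ := by rw [← stmt_term_eq lam z j n]
  have hswapped : Summable (fun p : ℕ × ℕ =>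
      ‖apC lam z p.2‖ * (‖pochC (-((p.2:ℂ)/2)) p.1‖ / p.1.factorial) * (δ/2) ^ p.1) := by
    have h := habs2.prod_symm
    exact h.congr fun p => rfl
  have hmarg : Summable (fun n : ℕ => ∑' j : ℕ,
      ‖apC lam z j‖ * (‖pochC (-((j:ℂ)/2)) n‖ / n.factorial) * (δ/2) ^ n) :=
    ((summable_prod_of_nonneg (fun p => by positivity)).1 hswapped).2
  have hcsum : Summable (fun n : ℕ => ‖c n‖ * (δ/2) ^ n) := by
    apply hmarg.of_nonneg_of_le (fun n => by positivity)
    intro n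
    have h1 : ‖c n‖ ≤ ∑' j, ‖apC lam z j * bpC j n‖ := norm_tsum_le_tsum_norm (hcolnorm n)
    calc ‖c n‖ * (δ/2) ^ n
        ≤ (∑' j, ‖apC lam z j * bpC j n‖) * (δ/2) ^ n :=
          mul_le_mul_of_nonneg_right h1 (by positivity)
      _ = ∑' j, ‖apC lam z j * bpC j n‖ * (δ/2) ^ n := (tsum_mul_right).symm
      _ = _ := by
          apply tsum_congr
          intro j
          rw [norm_mul, hbpnorm]
  set Hf : ℂ → ℂ := fun τ => (1 + (z:ℂ) * (1 - τ) ^ (1/2 : ℂ)) ^ (-lam) with hHf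
  set R : NNReal := ⟨(1 + ‖t‖)/2, by positivity⟩ with hR
  have habst : (0:ℝ) ≤ ‖t‖ := norm_nonneg t
  have hRlt1 : (R:ℝ) < 1 := by
    show (1 + ‖t‖)/2 < 1
    linarith
  have hR0 : 0 < R := by
    rw [← NNReal.coe_pos]
    show (0:ℝ) < (1 + ‖t‖)/2
    positivity
  have htR : ‖t‖ < (R:ℝ) := by
    show _ < (1 + ‖t‖)/2
    linarith
  have hd : DifferentiableOn ℂ Hf (Metric.closedBall 0 (R:ℝ)) :=
    (H_diffOn lam z hz1 hz2).mono (Metric.closedBall_subset_ball hRlt1)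
  have hp : HasFPowerSeriesOnBall Hf (cauchyPowerSeries Hf 0 R) 0 R :=
    hd.hasFPowerSeriesOnBall hR0
  set q : FormalMultilinearSeries ℂ ℂ ℂ := FormalMultilinearSeries.ofScalars ℂ c with hqdef
  set rr : NNReal := ⟨δ/2, by positivity⟩ with hrr
  have hrad : (rr : ENNReal) ≤ q.radius := by
    apply FormalMultilinearSeries.le_radius_of_summable
    apply hcsum.congr
    intro n
    rw [hqdef, FormalMultilinearSeries.ofScalars_norm]
    rfl
  have hqball : HasFPowerSeriesOnBall Hf q 0 rr := by
    refine ⟨hrad, ?_, ?_⟩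
    · rw [ENNReal.coe_pos, ← NNReal.coe_pos]
      show (0:ℝ) < δ/2
      positivity
    · intro y hy
      rw [mem_emetric_ball_zero_iff, enorm_eq_nnnorm, ENNReal.coe_lt_coe, ← NNReal.coe_lt_coe] at hy
      have hynorm : ‖y‖ < δ/2 := by
        exact hy
      have hk := key_hasSum lam z hZ (τ := y) (by rw [← hδ]; linarith)
      rw [zero_add]
      have hfeq : (fun n : ℕ => q n fun _ => y) = fun n : ℕ => c n * y ^ n := by
        funext n
        rw [hqdef, FormalMultilinearSeries.ofScalars_apply_eq, smul_eq_mul]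
      rw [hfeq]
      exact hk
  have hpq : q = cauchyPowerSeries Hf 0 R :=
    hqball.hasFPowerSeriesAt.eq_formalMultilinearSeries hp.hasFPowerSeriesAt
  have htmem : t ∈ EMetric.ball (0:ℂ) R := by
    show t ∈ Metric.eball (0:ℂ) R
    rw [mem_emetric_ball_zero_iff, enorm_eq_nnnorm, ENNReal.coe_lt_coe, ← NNReal.coe_lt_coe]
    simpa [coe_nnnorm] using htR
  have hfinal := hp.hasSum htmem
  rw [← hpq] at hfinal
  have hfeq2 : (fun n : ℕ => q n fun _ => t) = fun n : ℕ => c n * t ^ n := by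
    funext n
    rw [hqdef, FormalMultilinearSeries.ofScalars_apply_eq, smul_eq_mul]
  rw [hfeq2, zero_add] at hfinal
  refine ⟨hclaim1, ?_⟩
  have hfun : (fun n : ℕ =>
      ((2 : ℂ) ^ n * ∑' j : ℕ, (-1 : ℂ) ^ (j + n) * pochC lam j *
          Complex.Gamma ((j : ℂ) / 2 + 1) /
          (Complex.Gamma ((j : ℂ) / 2 - n + 1) * (j.factorial : ℂ)) * (z : ℂ) ^ j) /
        ((2 : ℂ) ^ n * (n.factorial : ℂ)) * t ^ n)
      = fun n : ℕ => c n * t ^ n := by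
    funext n
    have h2n : ((2:ℂ) ^ n) ≠ 0 := pow_ne_zero n two_ne_zero
    have hnf : ((n.factorial : ℂ)) ≠ 0 := Nat.cast_ne_zero.2 n.factorial_ne_zero
    have hts : (∑' j : ℕ, (-1 : ℂ) ^ (j + n) * pochC lam j *
        Complex.Gamma ((j : ℂ) / 2 + 1) /
        (Complex.Gamma ((j : ℂ) / 2 - n + 1) * (j.factorial : ℂ)) * (z : ℂ) ^ j)
        = c n * (n.factorial : ℂ) := by
      rw [hc, ← tsum_mul_right]
      exact tsum_congr fun j => stmt_term_eq lam z j n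
    rw [hts]
    field_simp
  rw [hfun]
  exact hfinal
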